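/- Let G be a subgroup of S_d acting freely and transitively on {1,...,d} with m coprime to d (or d prime). Suppose a monomial x_{g_1(i)}⋯x_{g_m(i)} appearing in φ_{[(g_1,...,g_m)]} equals a monomial x_{h_1(j)}⋯x_{h_m(j)} appearing in φ_{[(h_1,...,h_m)]}. Then [(g_1,...,g_m)] = [(h_1,...,h_m)] in S(G,m). -/

import Mathlib

/-- The relation on `m`-tuples of elements of `G` identifying two tuples iff one is
obtained from the other by permuting the coordinates and simultaneously multiplying
every coordinate on the right by a fixed element of `G`. -/
def SGmRel (G : Type*) [Group G] (m : ℕ) (a b : Fin m → G) : Prop :=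
  ∃ (σ : Equiv.Perm (Fin m)) (g : G), ∀ r, b r = a (σ r) * g

/-- `S(G,m) = (G^m / S_m) / G`: the quotient of `G^m` by permutation of coordinates
and simultaneous right multiplication. -/
def SGm (G : Type*) [Group G] (m : ℕ) : Type _ :=
  Quot (SGmRel G m)

/-- If two tuples into a linear order have the same multiset of values, they differ by
a permutation of the indices. -/
lemma exists_perm_of_multiset_eq {m : ℕ} {α : Type*} [LinearOrder α] (f f' : Fin m → α)
    (h : Multiset.map f Finset.univ.val = Multiset.map f' Finset.univ.val) :
    ∃ σ : Equiv.Perm (Fin m), f' = f ∘ σ := by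
  have hp1 : List.Perm (List.ofFn (f ∘ Tuple.sort f)) (List.ofFn f) :=
    (Tuple.sort f).ofFn_comp_perm f
  have hp2 : List.Perm (List.ofFn f) (List.ofFn f') := by
    rw [← Multiset.coe_eq_coe, ← Fin.univ_val_map, ← Fin.univ_val_map]
    exact_mod_cast h
  have hp3 : List.Perm (List.ofFn f') (List.ofFn (f' ∘ Tuple.sort f')) :=
    ((Tuple.sort f').ofFn_comp_perm f').symm
  have h1 : List.ofFn (f ∘ Tuple.sort f) = List.ofFn (f' ∘ Tuple.sort f') :=
    List.Perm.eq_of_sortedLE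
      (List.sortedLE_ofFn_iff.mpr (Tuple.monotone_sort f))
      (List.sortedLE_ofFn_iff.mpr (Tuple.monotone_sort f')) ((hp1.trans hp2).trans hp3)
  have h2 : f ∘ Tuple.sort f = f' ∘ Tuple.sort f' := List.ofFn_inj.mp h1
  refine ⟨(Tuple.sort f').symm.trans (Tuple.sort f), ?_⟩
  funext r
  have := congrFun h2 ((Tuple.sort f').symm r)
  simpa using this.symm

theorem stmt7 (d m : ℕ) (hm : 2 ≤ m) (hdm : Nat.Coprime m d ∨ d.Prime)
    (G : Subgroup (Equiv.Perm (Fin d)))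
    (hreg : ∀ i j : Fin d, ∃! g : G, (g : Equiv.Perm (Fin d)) i = j)
    (g h : Fin m → ↥G) (i j : Fin d)
    (hmon : Multiset.map (fun r => (g r : Equiv.Perm (Fin d)) i) Finset.univ.val =
      Multiset.map (fun r => (h r : Equiv.Perm (Fin d)) j) Finset.univ.val) :
    Quot.mk (SGmRel (↥G) m) g = Quot.mk (SGmRel (↥G) m) h := by
  obtain ⟨σ, hσ⟩ := exists_perm_of_multiset_eq _ _ hmon
  obtain ⟨t, ht, -⟩ := hreg j i
  refine Quot.sound ⟨σ, t, fun r => ?_⟩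
  obtain ⟨u, -, hu⟩ := hreg j ((h r : Equiv.Perm (Fin d)) j)
  have h1 : (((g (σ r)) * t : G) : Equiv.Perm (Fin d)) j = (h r : Equiv.Perm (Fin d)) j := by
    have := congrFun hσ r
    simp only [Function.comp] at this
    simp [ht, ← this]
  rw [hu _ h1, hu (h r) rfl]
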